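/- arXiv:1203.0132 — 3 statements merged into one kernel-verified Lean document; each statement's English description precedes it below -/
import Mathlib

section
/- There is an absolute constant δ > 0 such that the following holds: for every 0 < p < 1, every positive integer N, every binomial random variable X with parameters N and p, and every integer r with 1 ≤ r ≤ N − 1 and r ≤ Np, one has Pr(X ≤ r) ≥ δ · max{r^{−1/2}, (N−r)^{−1/2}} · exp(−N Λ*(r/N)). -/
open MeasureTheory Filter Real Asymptotics
open scoped ENNReal Classical

/-- Bernoulli measure on `Bool` with success probability `p`. -/
noncomputable def bern (p : ℝ) : Measure Bool :=
  (ENNReal.ofReal p) • Measure.dirac true + (ENNReal.ofReal (1 - p)) • Measure.dirac false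

instance bern.isFiniteMeasure (p : ℝ) : IsFiniteMeasure (bern p) := by
  constructor
  simp [bern, Measure.add_apply, Measure.smul_apply]

/-- The Erdős–Rényi random graph measure `G(n,p)`: each potential edge (a non-diagonal
element of `Sym2 (Fin n)`) is present independently with probability `p`. -/
noncomputable def gnp (n : ℕ) (p : ℝ) : Measure (Sym2 (Fin n) → Bool) :=
  Measure.pi fun _ => bern p

/-- Number of edges of the graph `ω` induced by the vertex set `S`. -/
noncomputable def edgeCount {n : ℕ} (ω : Sym2 (Fin n) → Bool) (S : Finset (Fin n)) : ℕ :=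
  Set.ncard {e : Sym2 (Fin n) | ¬ e.IsDiag ∧ (∀ v ∈ e, v ∈ S) ∧ ω e = true}

/-- `S` is `t`-sparse in `ω`: the induced subgraph has average degree at most `t`. -/
def TSparse {n : ℕ} (t : ℝ) (ω : Sym2 (Fin n) → Bool) (S : Finset (Fin n)) : Prop :=
  (edgeCount ω S : ℝ) ≤ t * S.card / 2

/-- The `t`-sparsity number: the largest size of a `t`-sparse vertex subset. -/
noncomputable def sparsityNumber {n : ℕ} (t : ℝ) (ω : Sym2 (Fin n) → Bool) : ℕ :=
  sSup {k : ℕ | ∃ S : Finset (Fin n), S.card = k ∧ TSparse t ω S}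

/-- The quantity `ᾱ_{t,p}(n)`. -/
noncomputable def alphaTP (t p : ℝ) (n : ℕ) : ℝ :=
  2 * Real.logb (1/(1-p)) n
    + (t - 2) * Real.logb (1/(1-p)) (Real.logb (1/(1-p)) (n * p))
    - t * Real.logb (1/(1-p)) t
    + t * Real.logb (1/(1-p)) (2 * (1/(1-p)) * p * Real.exp 1)
    + 2 * Real.logb (1/(1-p)) (Real.exp 1 / 2) + 1

/-- The Fenchel–Legendre transform `Λ*` for the Bernoulli(`p`) distribution. -/
noncomputable def LambdaStar (p x : ℝ) : ℝ :=
  x * Real.log (x / p) + (1 - x) * Real.log ((1 - x) / (1 - p))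

/-- The number of `t`-sparse `k`-element vertex subsets in `ω`. -/
noncomputable def sparseCount {n : ℕ} (t : ℝ) (k : ℕ) (ω : Sym2 (Fin n) → Bool) : ℕ :=
  Set.ncard {S : Finset (Fin n) | S.card = k ∧ TSparse t ω S}

/-- The expected number of `t`-sparse `k`-element subsets of `[n]` in `G(n,p)`. -/
noncomputable def expSparseCount (n : ℕ) (p t : ℝ) (k : ℕ) : ℝ :=
  ∫ ω, (sparseCount t k ω : ℝ) ∂(gnp n p)

/-- A fixed `k`-element subset of `Fin n` (when `k ≤ n`): the first `k` vertices. -/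
def segA (n k : ℕ) : Finset (Fin n) := Finset.univ.filter (fun i => (i : ℕ) < k)

/-- A fixed `k`-element subset of `Fin n` meeting `segA n k` in exactly `ℓ` vertices
(when `ℓ ≤ k` and `2k - ℓ ≤ n`). -/
def segB (n k ℓ : ℕ) : Finset (Fin n) :=
  Finset.univ.filter (fun i => k - ℓ ≤ (i : ℕ) ∧ (i : ℕ) < 2 * k - ℓ)

/-- `p(k,ℓ)`: the probability that two fixed `k`-element subsets of `[n]` overlapping in
exactly `ℓ` vertices are both `t`-sparse in `G(n,p)`. -/
noncomputable def pkl (n : ℕ) (p t : ℝ) (k ℓ : ℕ) : ℝ :=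
  (gnp n p {ω | TSparse t ω (segA n k) ∧ TSparse t ω (segB n k ℓ)}).toReal

/-- `f(ℓ) = C(n,k)·C(k,ℓ)·C(n−k,k−ℓ)·p(k,ℓ)`. -/
noncomputable def fSum (n : ℕ) (p t : ℝ) (k ℓ : ℕ) : ℝ :=
  (n.choose k : ℝ) * (k.choose ℓ) * ((n - k).choose (k - ℓ)) * pkl n p t k ℓ


lemma stirling_ge (n : ℕ) : Real.sqrt π ≤ Stirling.stirlingSeq (n + 1) := by
  have ht : Tendsto (Stirling.stirlingSeq ∘ Nat.succ) atTop (nhds (Real.sqrt π)) :=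
    Stirling.tendsto_stirlingSeq_sqrt_pi.comp (tendsto_add_atTop_nat 1)
  exact Stirling.stirlingSeq'_antitone.le_of_tendsto ht n

lemma stirling_le (n : ℕ) : Stirling.stirlingSeq (n + 1) ≤ Real.exp 1 / Real.sqrt 2 := by
  have := Stirling.stirlingSeq'_antitone (Nat.zero_le n)
  simpa [Stirling.stirlingSeq_one] using this

lemma fact_lb (n : ℕ) (hn : 1 ≤ n) :
    Real.sqrt π * (Real.sqrt (2 * (n : ℝ)) * ((n : ℝ) / Real.exp 1) ^ n) ≤ (n.factorial : ℝ) := by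
  obtain ⟨m, rfl⟩ := Nat.exists_eq_add_of_le hn
  have h := stirling_ge m
  have hD : 0 < Real.sqrt (2 * ((1 + m : ℕ) : ℝ)) * (((1 + m : ℕ) : ℝ) / Real.exp 1) ^ (1 + m) := by
    have : (0:ℝ) < ((1 + m : ℕ) : ℝ) := by positivity
    positivity
  rw [Stirling.stirlingSeq, le_div_iff₀] at h
  · simpa [Nat.add_comm 1 m] using h
  · simpa [Nat.add_comm 1 m] using hD

lemma fact_ub (n : ℕ) (hn : 1 ≤ n) :
    (n.factorial : ℝ) ≤ (Real.exp 1 / Real.sqrt 2) * (Real.sqrt (2 * (n : ℝ)) * ((n : ℝ) / Real.exp 1) ^ n) := by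
  obtain ⟨m, rfl⟩ := Nat.exists_eq_add_of_le hn
  have h := stirling_le m
  have hD : 0 < Real.sqrt (2 * ((1 + m : ℕ) : ℝ)) * (((1 + m : ℕ) : ℝ) / Real.exp 1) ^ (1 + m) := by
    have : (0:ℝ) < ((1 + m : ℕ) : ℝ) := by positivity
    positivity
  rw [Stirling.stirlingSeq, div_le_iff₀] at h
  · simpa [Nat.add_comm 1 m] using h
  · simpa [Nat.add_comm 1 m] using hD

/-- `n! * e^n` lower bound, division-free in the power. -/
lemma fact_lb' (n : ℕ) (hn : 1 ≤ n) :
    Real.sqrt π * Real.sqrt 2 * Real.sqrt n * (n : ℝ) ^ n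
      ≤ (n.factorial : ℝ) * Real.exp 1 ^ n := by
  have h := fact_lb n hn
  have he : (0:ℝ) < Real.exp 1 ^ n := by positivity
  have hnn : (0:ℝ) < (n:ℝ) := by exact_mod_cast hn
  have h2 : Real.sqrt (2 * (n:ℝ)) = Real.sqrt 2 * Real.sqrt n := Real.sqrt_mul (by norm_num) _
  have h3 : ((n:ℝ) / Real.exp 1) ^ n * Real.exp 1 ^ n = (n:ℝ) ^ n := by
    rw [← mul_pow, div_mul_cancel₀ _ (Real.exp_pos 1).ne']
  calc Real.sqrt π * Real.sqrt 2 * Real.sqrt n * (n : ℝ) ^ n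
      = Real.sqrt π * (Real.sqrt (2 * (n:ℝ)) * ((n:ℝ) / Real.exp 1) ^ n) * Real.exp 1 ^ n := by
        rw [h2, ← h3]; ring
    _ ≤ (n.factorial : ℝ) * Real.exp 1 ^ n := by
        exact mul_le_mul_of_nonneg_right h he.le

/-- `n! * e^n` upper bound, division-free in the power. -/
lemma fact_ub' (n : ℕ) (hn : 1 ≤ n) :
    (n.factorial : ℝ) * Real.exp 1 ^ n ≤ Real.exp 1 * Real.sqrt n * (n : ℝ) ^ n := by
  have h := fact_ub n hn
  have he : (0:ℝ) < Real.exp 1 ^ n := by positivity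
  have h2 : Real.sqrt (2 * (n:ℝ)) = Real.sqrt 2 * Real.sqrt n := Real.sqrt_mul (by norm_num) _
  have h3 : ((n:ℝ) / Real.exp 1) ^ n * Real.exp 1 ^ n = (n:ℝ) ^ n := by
    rw [← mul_pow, div_mul_cancel₀ _ (Real.exp_pos 1).ne']
  have hs2 : Real.sqrt 2 ≠ 0 := by positivity
  calc (n.factorial : ℝ) * Real.exp 1 ^ n
      ≤ (Real.exp 1 / Real.sqrt 2) * (Real.sqrt (2 * (n:ℝ)) * ((n:ℝ) / Real.exp 1) ^ n) * Real.exp 1 ^ n :=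
        mul_le_mul_of_nonneg_right h he.le
    _ = Real.exp 1 * Real.sqrt n * (((n:ℝ) / Real.exp 1) ^ n * Real.exp 1 ^ n) := by
        rw [h2]; field_simp
    _ = Real.exp 1 * Real.sqrt n * (n : ℝ) ^ n := by rw [h3]

/-- lower large-deviations bound for the binomial distribution. -/
theorem binomial_lower_deviation :
    ∃ δ : ℝ, 0 < δ ∧ ∀ p : ℝ, 0 < p → p < 1 → ∀ N : ℕ, 0 < N →
      ∀ r : ℕ, 1 ≤ r → r ≤ N - 1 → (r : ℝ) ≤ N * p →
        δ * max ((r : ℝ) ^ (-(1/2) : ℝ)) (((N : ℝ) - r) ^ (-(1/2) : ℝ))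
            * Real.exp (-(N : ℝ) * LambdaStar p ((r : ℝ) / N))
          ≤ ∑ i ∈ Finset.range (r + 1), (N.choose i : ℝ) * p ^ i * (1 - p) ^ (N - i) := by
  refine ⟨Real.sqrt (2 * π) / Real.exp 1 ^ 2, by positivity, ?_⟩
  intro p hp hp1 N hN r hr1 hrN1 _hrNp
  have hrN : r ≤ N := by omega
  set s := N - r with hs
  have hs1 : 1 ≤ s := by omega
  have hrs : r + s = N := by omega
  have hq : (0:ℝ) < 1 - p := by linarith
  have hNpos : (0:ℝ) < N := by exact_mod_cast hN
  have hrpos : (0:ℝ) < r := by exact_mod_cast hr1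
  have hspos : (0:ℝ) < s := by exact_mod_cast hs1
  have hcast : ((N:ℝ) - r) = (s:ℝ) := by rw [hs, Nat.cast_sub hrN]
  set E := Real.exp 1 with hE
  have hEpos : (0:ℝ) < E := Real.exp_pos 1
  set C := (N.choose r : ℝ) with hC
  have hCpos : (0:ℝ) < C := by
    rw [hC]
    exact_mod_cast Nat.choose_pos hrN
  set M := max ((r : ℝ) ^ (-(1/2) : ℝ)) (((N : ℝ) - r) ^ (-(1/2) : ℝ)) with hM
  have hMpos : 0 < M := lt_max_of_lt_left (by positivity)
  -- exp identity
  have hexpA : Real.exp (-(N : ℝ) * LambdaStar p ((r : ℝ) / N)) =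
      ((N:ℝ) * p / r) ^ r * ((N:ℝ) * (1 - p) / s) ^ s := by
    have hx1 : 1 - (r:ℝ)/N = (s:ℝ)/N := by
      rw [← hcast]; field_simp
    have l1 : Real.log (((r:ℝ)/N)/p) = - Real.log ((N:ℝ)*p/r) := by
      rw [show ((r:ℝ)/N)/p = ((N:ℝ)*p/r)⁻¹ by field_simp, Real.log_inv]
    have l2 : Real.log (((s:ℝ)/N)/(1-p)) = - Real.log ((N:ℝ)*(1-p)/s) := by
      rw [show ((s:ℝ)/N)/(1-p) = ((N:ℝ)*(1-p)/s)⁻¹ by field_simp <;> ring, Real.log_inv]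
    have e1 : -(N : ℝ) * LambdaStar p ((r : ℝ) / N)
        = (r:ℝ) * Real.log ((N:ℝ)*p/r) + (s:ℝ) * Real.log ((N:ℝ)*(1-p)/s) := by
      rw [LambdaStar, hx1, l1, l2]
      field_simp
      ring
    rw [e1, Real.exp_add, Real.exp_nat_mul, Real.exp_nat_mul,
      Real.exp_log (by positivity), Real.exp_log (by positivity)]
  -- the single-term lower bound
  have hterm : C * p ^ r * (1 - p) ^ s
      ≤ ∑ i ∈ Finset.range (r + 1), (N.choose i : ℝ) * p ^ i * (1 - p) ^ (N - i) := by
    have := Finset.single_le_sum (f := fun i => (N.choose i : ℝ) * p ^ i * (1 - p) ^ (N - i))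
      (fun i _ => by positivity) (Finset.self_mem_range_succ r)
    simpa [hs] using this
  -- max bound
  have hsqr : (0:ℝ) < Real.sqrt r := Real.sqrt_pos.mpr hrpos
  have hsqs : (0:ℝ) < Real.sqrt s := Real.sqrt_pos.mpr hspos
  have hsqN : (0:ℝ) < Real.sqrt N := Real.sqrt_pos.mpr hNpos
  have hMle : M ≤ Real.sqrt N / (Real.sqrt r * Real.sqrt s) := by
    have hrinv : (r:ℝ) ^ (-(1/2) : ℝ) = (Real.sqrt r)⁻¹ := by
      rw [Real.rpow_neg hrpos.le, ← Real.sqrt_eq_rpow]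
    have hsinv : ((N:ℝ) - r) ^ (-(1/2) : ℝ) = (Real.sqrt s)⁻¹ := by
      rw [hcast, Real.rpow_neg hspos.le, ← Real.sqrt_eq_rpow]
    have hsN : Real.sqrt s ≤ Real.sqrt N := Real.sqrt_le_sqrt (by exact_mod_cast Nat.sub_le N r)
    have hrN' : Real.sqrt r ≤ Real.sqrt N := Real.sqrt_le_sqrt (by exact_mod_cast hrN)
    rw [hM, hrinv, hsinv, max_le_iff]
    constructor
    · rw [inv_eq_one_div, div_le_div_iff₀ hsqr (by positivity)]
      nlinarith
    · rw [inv_eq_one_div, div_le_div_iff₀ hsqs (by positivity)]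
      nlinarith
  -- Stirling combination
  have hCf : C * (r.factorial : ℝ) * (s.factorial : ℝ) = (N.factorial : ℝ) := by
    have := Nat.choose_mul_factorial_mul_factorial hrN
    rw [hC, hs]
    exact_mod_cast congrArg (Nat.cast : ℕ → ℝ) this
  have keyfinal : Real.sqrt (2*π) * Real.sqrt N * (N:ℝ)^N
      ≤ C * E^2 * (Real.sqrt r * Real.sqrt s) * ((r:ℝ)^r * (s:ℝ)^s) := by
    have hl := fact_lb' N (by omega)
    have hur := fact_ub' r hr1
    have hus := fact_ub' s hs1
    have hEN : E ^ N = E ^ r * E ^ s := by rw [← pow_add, hrs]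
    have step : (N.factorial : ℝ) * E ^ N
        ≤ C * (E * Real.sqrt r * (r:ℝ)^r) * (E * Real.sqrt s * (s:ℝ)^s) := by
      rw [← hCf, hEN]
      calc C * (r.factorial : ℝ) * (s.factorial : ℝ) * (E ^ r * E ^ s)
          = C * (((r.factorial : ℝ)) * E ^ r) * (((s.factorial : ℝ)) * E ^ s) := by ring
        _ ≤ C * (E * Real.sqrt r * (r:ℝ)^r) * (E * Real.sqrt s * (s:ℝ)^s) := by
            apply mul_le_mul
            · exact mul_le_mul_of_nonneg_left hur hCpos.le
            · exact hus
            · positivity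
            · positivity
    have hsp : Real.sqrt (2*π) = Real.sqrt 2 * Real.sqrt π := Real.sqrt_mul (by norm_num) _
    calc Real.sqrt (2*π) * Real.sqrt N * (N:ℝ)^N
        = Real.sqrt π * Real.sqrt 2 * Real.sqrt N * (N:ℝ)^N := by rw [hsp]; ring
      _ ≤ (N.factorial : ℝ) * E ^ N := fact_lb' N (by omega)
      _ ≤ C * (E * Real.sqrt r * (r:ℝ)^r) * (E * Real.sqrt s * (s:ℝ)^s) := step
      _ = C * E^2 * (Real.sqrt r * Real.sqrt s) * ((r:ℝ)^r * (s:ℝ)^s) := by ring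
  -- key inequality
  have key : Real.sqrt (2*π) / E^2 * M * (N:ℝ)^N ≤ C * ((r:ℝ)^r * (s:ℝ)^s) := by
    have step1 : Real.sqrt (2*π) / E^2 * M * (N:ℝ)^N
        ≤ Real.sqrt (2*π) / E^2 * (Real.sqrt N / (Real.sqrt r * Real.sqrt s)) * (N:ℝ)^N := by
      have hc : (0:ℝ) ≤ Real.sqrt (2*π) / E^2 := by positivity
      have hNN : (0:ℝ) ≤ (N:ℝ)^N := by positivity
      exact mul_le_mul_of_nonneg_right (mul_le_mul_of_nonneg_left hMle hc) hNN
    refine step1.trans ?_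
    rw [show Real.sqrt (2*π) / E^2 * (Real.sqrt N / (Real.sqrt r * Real.sqrt s)) * (N:ℝ)^N
        = (Real.sqrt (2*π) * Real.sqrt N * (N:ℝ)^N) / (E^2 * (Real.sqrt r * Real.sqrt s)) by
          field_simp <;> ring, div_le_iff₀ (by positivity)]
    calc Real.sqrt (2*π) * Real.sqrt N * (N:ℝ)^N
        ≤ C * E^2 * (Real.sqrt r * Real.sqrt s) * ((r:ℝ)^r * (s:ℝ)^s) := keyfinal
      _ = C * ((r:ℝ)^r * (s:ℝ)^s) * (E ^ 2 * (Real.sqrt r * Real.sqrt s)) := by ring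
  -- combine
  refine le_trans ?_ hterm
  rw [hexpA]
  have hR : (0:ℝ) < (r:ℝ)^r * (s:ℝ)^s := by positivity
  rw [← mul_le_mul_iff_of_pos_right hR]
  have hprod : ((N:ℝ) * p / r) ^ r * ((N:ℝ) * (1 - p) / s) ^ s * ((r:ℝ)^r * (s:ℝ)^s)
      = (N:ℝ)^N * (p ^ r * (1 - p) ^ s) := by
    have a1 : ((N:ℝ) * p / r) ^ r * (r:ℝ)^r = ((N:ℝ) * p) ^ r := by
      rw [← mul_pow, div_mul_cancel₀ _ hrpos.ne']
    have a2 : ((N:ℝ) * (1 - p) / s) ^ s * (s:ℝ)^s = ((N:ℝ) * (1 - p)) ^ s := by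
      rw [← mul_pow, div_mul_cancel₀ _ hspos.ne']
    have a3 : (N:ℝ)^r * (N:ℝ)^s = (N:ℝ)^N := by rw [← pow_add, hrs]
    calc ((N:ℝ) * p / r) ^ r * ((N:ℝ) * (1 - p) / s) ^ s * ((r:ℝ)^r * (s:ℝ)^s)
        = (((N:ℝ) * p / r) ^ r * (r:ℝ)^r) * (((N:ℝ) * (1 - p) / s) ^ s * (s:ℝ)^s) := by ring
      _ = ((N:ℝ) * p) ^ r * ((N:ℝ) * (1 - p)) ^ s := by rw [a1, a2]
      _ = ((N:ℝ)^r * (N:ℝ)^s) * (p ^ r * (1 - p) ^ s) := by rw [mul_pow, mul_pow]; ring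
      _ = (N:ℝ)^N * (p ^ r * (1 - p) ^ s) := by rw [a3]
  calc Real.sqrt (2*π) / E^2 * M * (((N:ℝ) * p / r) ^ r * ((N:ℝ) * (1 - p) / s) ^ s)
        * ((r:ℝ)^r * (s:ℝ)^s)
      = Real.sqrt (2*π) / E^2 * M * ((N:ℝ)^N * (p ^ r * (1 - p) ^ s)) := by
        rw [mul_assoc, hprod]
    _ = (Real.sqrt (2*π) / E^2 * M * (N:ℝ)^N) * (p ^ r * (1 - p) ^ s) := by ring
    _ ≤ (C * ((r:ℝ)^r * (s:ℝ)^s)) * (p ^ r * (1 - p) ^ s) := by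
        exact mul_le_mul_of_nonneg_right key (by positivity)
    _ = C * p ^ r * (1 - p) ^ s * ((r:ℝ)^r * (s:ℝ)^s) := by ring
end

section
/- Fix 0 < ξ < 1. Then there exists δ = δ(ξ) > 0 such that for every 0 < p < 1 there is a unique ψ ∈ (0,1) with Λ*(ψp) = (1−ξ) ln b, and moreover this ψ satisfies ψ ≥ δ (uniformly over all p in (0,1)). -/
open MeasureTheory Filter Real Asymptotics
open scoped ENNReal Classical

noncomputable def gfun (p x : ℝ) : ℝ :=
  x * (Real.log x - Real.log p) + (1-x) * (Real.log (1-x) - Real.log (1-p))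

lemma hasDerivAt_gfun (p x : ℝ) (hx : 0 < x) (hx1 : x < 1) :
    HasDerivAt (gfun p)
      (Real.log x - Real.log p - (Real.log (1-x) - Real.log (1-p))) x := by
  have hne : (1:ℝ) - x ≠ 0 := by linarith
  have h1 : HasDerivAt (fun y => y * (Real.log y - Real.log p))
      ((Real.log x - Real.log p) + 1) x := by
    have hlog := (Real.hasDerivAt_log hx.ne').sub_const (Real.log p)
    have := (hasDerivAt_id x).mul hlog
    refine this.congr_deriv ?_
    simp [hx.ne']
  have h0 : HasDerivAt (fun y : ℝ => 1 - y) (-1) x := by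
    simpa using (hasDerivAt_id x).const_sub 1
  have hl : HasDerivAt (fun y => Real.log (1-y) - Real.log (1-p)) (-(1-x)⁻¹) x := by
    have := ((Real.hasDerivAt_log hne).comp x h0).sub_const (Real.log (1-p))
    refine this.congr_deriv ?_
    ring
  have h2 : HasDerivAt (fun y => (1-y) * (Real.log (1-y) - Real.log (1-p)))
      (-(Real.log (1-x) - Real.log (1-p)) - 1) x := by
    have := h0.mul hl
    refine this.congr_deriv ?_
    field_simp
    ring
  have := h1.add h2
  refine this.congr_deriv ?_
  ring

lemma gfun_strictAntiOn (p a : ℝ) (hp1 : p < 1) (ha : 0 < a) (hap : a < p) :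
    StrictAntiOn (gfun p) (Set.Icc a p) := by
  apply strictAntiOn_of_deriv_neg (convex_Icc a p)
  · intro x hx
    exact (hasDerivAt_gfun p x (lt_of_lt_of_le ha hx.1) (lt_of_le_of_lt hx.2 hp1)).continuousAt.continuousWithinAt
  · intro x hx
    rw [interior_Icc] at hx
    obtain ⟨hxa, hxp⟩ := hx
    have hx0 : 0 < x := lt_trans ha hxa
    have hx1 : x < 1 := lt_trans hxp hp1
    rw [(hasDerivAt_gfun p x hx0 hx1).deriv]
    have h1 : Real.log x < Real.log p := Real.log_lt_log hx0 hxp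
    have h2 : Real.log (1-p) < Real.log (1-x) := Real.log_lt_log (by linarith) (by linarith)
    linarith

/-- Quantitative gap bound: `L - gfun p (ψ p) ≤ 4 √ψ L` where `L = -log(1-p)`. -/
lemma gfun_gap (p ψ : ℝ) (hp : 0 < p) (hp1 : p < 1) (hψ : 0 < ψ) (hψ1 : ψ < 1) :
    -Real.log (1-p) - gfun p (ψ*p) ≤ 4 * Real.sqrt ψ * (-Real.log (1-p)) := by
  set L := -Real.log (1-p) with hL
  clear_value L
  have hq : (0:ℝ) < 1 - p := by linarith
  have hLpos : 0 < L := by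
    have := Real.log_neg hq (by linarith : 1 - p < 1)
    simp only [hL]; linarith
  have hpL : p ≤ L := by
    have := Real.log_le_sub_one_of_pos hq
    simp only [hL]; linarith
  have hx : 0 < ψ * p := mul_pos hψ hp
  have hx1 : ψ * p < 1 := by nlinarith
  have hs : 0 < Real.sqrt ψ := Real.sqrt_pos.mpr hψ
  have hs1 : Real.sqrt ψ ≤ 1 := by
    rw [show (1:ℝ) = Real.sqrt 1 by simp]
    exact Real.sqrt_le_sqrt (le_of_lt hψ1)
  have hψs : ψ ≤ Real.sqrt ψ := by
    nlinarith [Real.sq_sqrt hψ.le]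
  -- rewrite the gap
  have hlogx : Real.log (ψ*p) = Real.log ψ + Real.log p := Real.log_mul hψ.ne' hp.ne'
  have key : L - gfun p (ψ*p) =
      (ψ*p) * L + (ψ*p) * (-Real.log ψ) + (-(1 - ψ*p) * Real.log (1 - ψ*p)) := by
    simp only [gfun, hlogx, hL]
    ring
  -- bound each term
  have hA : (ψ*p) * L ≤ Real.sqrt ψ * L := by
    have : ψ * p ≤ ψ := by nlinarith
    nlinarith
  have hlogs : Real.log ψ = 2 * Real.log (Real.sqrt ψ) := (Real.log_sqrt hψ.le).symm ▸ by ring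
  have hBlog : -Real.log ψ ≤ 2 * (Real.sqrt ψ)⁻¹ := by
    have h := Real.log_le_sub_one_of_pos (show (0:ℝ) < (Real.sqrt ψ)⁻¹ by positivity)
    rw [Real.log_inv] at h
    rw [hlogs]
    have hi : (0:ℝ) ≤ (Real.sqrt ψ)⁻¹ := by positivity
    linarith
  have hB : (ψ*p) * (-Real.log ψ) ≤ 2 * Real.sqrt ψ * L := by
    have hnl : 0 ≤ -Real.log ψ := by
      have := Real.log_neg hψ hψ1; linarith
    have hmono : ψ * p ≤ ψ * L := by nlinarith
    have e1 : 0 ≤ (ψ*L - ψ*p) * (-Real.log ψ) := mul_nonneg (by linarith) hnl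
    have e2 : 0 ≤ (ψ*L) * (2*(Real.sqrt ψ)⁻¹ - (-Real.log ψ)) :=
      mul_nonneg (le_of_lt (mul_pos hψ hLpos)) (by linarith)
    have h1 : (ψ*p) * (-Real.log ψ) ≤ (ψ*L) * (2*(Real.sqrt ψ)⁻¹) := by nlinarith
    have h3 : (ψ*L) * (2*(Real.sqrt ψ)⁻¹) = 2 * Real.sqrt ψ * L := by
      rw [show ψ * L * (2*(Real.sqrt ψ)⁻¹) = 2*(ψ*(Real.sqrt ψ)⁻¹)*L by ring,
        ← div_eq_mul_inv, Real.div_sqrt]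
    linarith
  have hC : -(1 - ψ*p) * Real.log (1 - ψ*p) ≤ Real.sqrt ψ * L := by
    have h1mx : (0:ℝ) < 1 - ψ*p := by linarith
    have h := Real.log_le_sub_one_of_pos (show (0:ℝ) < (1 - ψ*p)⁻¹ by positivity)
    rw [Real.log_inv] at h
    -- -log(1-x) ≤ (1-x)⁻¹ - 1 = x/(1-x) ⇒ -(1-x) log(1-x) ≤ x
    have hstep : -(1 - ψ*p) * Real.log (1 - ψ*p) ≤ ψ*p := by
      have h2 : (1 - ψ*p) * ((1 - ψ*p)⁻¹ - 1) = ψ*p := by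
        field_simp
        ring
      nlinarith
    have : ψ * p ≤ Real.sqrt ψ * L := by nlinarith
    linarith
  linarith [key, hA, hB, hC]

lemma lambdaStar_eq_gfun (p x : ℝ) (hp : 0 < p) (hp1 : p < 1) (hx : 0 < x) (hx1 : x < 1) :
    LambdaStar p x = gfun p x := by
  unfold LambdaStar gfun
  rw [Real.log_div hx.ne' hp.ne',
    Real.log_div (by linarith : (1:ℝ)-x ≠ 0) (by linarith : (1:ℝ)-p ≠ 0)]

lemma gfun_self (p : ℝ) : gfun p p = 0 := by simp [gfun]

lemma psi_lb (ξ p ψ : ℝ) (hξ0 : 0 < ξ) (hp : 0 < p) (hp1 : p < 1)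
    (hψ0 : 0 < ψ) (hψ1 : ψ < 1)
    (heq : gfun p (ψ*p) = (1-ξ) * (-Real.log (1-p))) : ξ^2/16 ≤ ψ := by
  have hq : (0:ℝ) < 1 - p := by linarith
  have hLpos : 0 < -Real.log (1-p) := by
    have := Real.log_neg hq (by linarith : 1 - p < 1); linarith
  have hgap := gfun_gap p ψ hp hp1 hψ0 hψ1
  rw [heq] at hgap
  have h : ξ ≤ 4 * Real.sqrt ψ := by
    refine le_of_mul_le_mul_right ?_ hLpos
    nlinarith [hgap]
  have h2 : ξ^2 ≤ (4*Real.sqrt ψ)^2 := pow_le_pow_left₀ hξ0.le h 2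
  rw [mul_pow, Real.sq_sqrt hψ0.le] at h2
  linarith

/-- existence, uniqueness, and a uniform lower bound for `ψ` with
`Λ*(ψ p) = (1−ξ) ln b`. -/
theorem psi_exists_unique_bounded (ξ : ℝ) (hξ0 : 0 < ξ) (hξ1 : ξ < 1) :
    ∃ δ : ℝ, 0 < δ ∧ ∀ p : ℝ, 0 < p → p < 1 →
      ∃ ψ : ℝ, (ψ ∈ Set.Ioo (0 : ℝ) 1 ∧
          LambdaStar p (ψ * p) = (1 - ξ) * Real.log (1 / (1 - p)) ∧ δ ≤ ψ) ∧
        ∀ ψ' ∈ Set.Ioo (0 : ℝ) 1,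
          LambdaStar p (ψ' * p) = (1 - ξ) * Real.log (1 / (1 - p)) → ψ' = ψ := by
  refine ⟨ξ^2/16, by positivity, fun p hp hp1 => ?_⟩
  have hq : (0:ℝ) < 1 - p := by linarith
  have hLdef : Real.log (1/(1-p)) = -Real.log (1-p) := by rw [one_div, Real.log_inv]
  have hLpos : 0 < -Real.log (1-p) := by
    have := Real.log_neg hq (by linarith : 1 - p < 1); linarith
  set a : ℝ := ξ^2/32 with hadef
  have ha0 : 0 < a := by positivity
  have ha1 : a < 1 := by nlinarith
  have hsa : 4 * Real.sqrt a < ξ := by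
    have hsq : (4 * Real.sqrt a)^2 < ξ^2 := by
      rw [mul_pow, Real.sq_sqrt ha0.le]; nlinarith
    exact lt_of_pow_lt_pow_left₀ 2 hξ0.le hsq
  -- value at a*p is above the target
  have hgapa := gfun_gap p a hp hp1 ha0 ha1
  have hhigh : (1-ξ) * (-Real.log (1-p)) < gfun p (a*p) := by nlinarith
  have hlow : (0:ℝ) ≤ (1-ξ) * (-Real.log (1-p)) := by nlinarith
  -- IVT
  have hap : a * p < p := by nlinarith
  have hcont : ContinuousOn (gfun p) (Set.Icc (a*p) p) := by
    intro x hx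
    have hx0 : 0 < x := lt_of_lt_of_le (mul_pos ha0 hp) hx.1
    have hx1 : x < 1 := lt_of_le_of_lt hx.2 hp1
    exact (hasDerivAt_gfun p x hx0 hx1).continuousAt.continuousWithinAt
  have hsub := intermediate_value_Icc' hap.le hcont
  have hmem : (1-ξ) * (-Real.log (1-p)) ∈ Set.Icc (gfun p p) (gfun p (a*p)) := by
    rw [gfun_self]
    exact ⟨hlow, hhigh.le⟩
  obtain ⟨x, hxmem, hgx⟩ := hsub hmem
  have hx0 : 0 < x := lt_of_lt_of_le (mul_pos ha0 hp) hxmem.1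
  have hxp : x < p := by
    rcases lt_or_eq_of_le hxmem.2 with h | h
    · exact h
    · exfalso
      rw [h, gfun_self] at hgx
      nlinarith
  set ψ : ℝ := x / p with hψdef
  have hψp : ψ * p = x := div_mul_cancel₀ x hp.ne'
  have hψ0 : 0 < ψ := div_pos hx0 hp
  have hψ1 : ψ < 1 := (div_lt_one hp).mpr hxp
  have hgψ : gfun p (ψ*p) = (1-ξ) * (-Real.log (1-p)) := by rw [hψp]; exact hgx
  have hx1 : x < 1 := lt_trans hxp hp1
  refine ⟨ψ, ⟨⟨hψ0, hψ1⟩, ?_, ?_⟩, ?_⟩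
  · rw [lambdaStar_eq_gfun p (ψ*p) hp hp1 (by rw [hψp]; exact hx0) (by rw [hψp]; exact hx1),
      hLdef]
    exact hgψ
  · exact psi_lb ξ p ψ hξ0 hp hp1 hψ0 hψ1 hgψ
  · rintro ψ' ⟨hψ'0, hψ'1⟩ heq'
    have hx'0 : 0 < ψ'*p := mul_pos hψ'0 hp
    have hx'1 : ψ'*p < 1 := by nlinarith
    rw [lambdaStar_eq_gfun p (ψ'*p) hp hp1 hx'0 hx'1, hLdef] at heq'
    -- strict anti on [m*p, p]
    set m : ℝ := min ψ' ψ with hmdef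
    have hm0 : 0 < m := lt_min hψ'0 hψ0
    have hm1 : m < 1 := lt_of_le_of_lt (min_le_right _ _) hψ1
    have hmp : m * p < p := by nlinarith
    have hanti := gfun_strictAntiOn p (m*p) hp1 (mul_pos hm0 hp) hmp
    have hmem' : ψ'*p ∈ Set.Icc (m*p) p :=
      ⟨mul_le_mul_of_nonneg_right (min_le_left _ _) hp.le, by nlinarith⟩
    have hmemψ : ψ*p ∈ Set.Icc (m*p) p :=
      ⟨mul_le_mul_of_nonneg_right (min_le_right _ _) hp.le, by nlinarith⟩
    have : ψ'*p = ψ*p := hanti.injOn hmem' hmemψ (by rw [heq', hgψ])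
    exact mul_right_cancel₀ hp.ne' this
end

section
/- Let 0 < p < 1, let t ≥ 0, let n, k, ℓ be positive integers with ℓ ≤ k ≤ n, and let A and B be k-element subsets of [n] with |A ∩ B| = ℓ. Then in G(n,p), Pr( A and B are both t-sparse ) ≤ b^{C(ℓ,2)} · ( Pr( A is t-sparse ) )², where b = 1/(1−p) and C(ℓ,2) = ℓ(ℓ−1)/2. -/
open MeasureTheory Filter Real Asymptotics
open scoped ENNReal Classical

section Helpers
variable {n : ℕ}

lemma bern_isProbability {p : ℝ} (h0 : 0 ≤ p) (h1 : p ≤ 1) : IsProbabilityMeasure (bern p) := by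
  constructor
  simp only [bern, Measure.coe_add, Measure.coe_smul, Pi.add_apply, Pi.smul_apply,
    measure_univ, smul_eq_mul, mul_one]
  rw [← ENNReal.ofReal_add h0 (by linarith)]
  norm_num

lemma bern_false {p : ℝ} (h0 : 0 ≤ p) : bern p {false} = ENNReal.ofReal (1 - p) := by
  simp [bern, Measure.dirac_apply]

lemma edgeCount_congr {ω ω' : Sym2 (Fin n) → Bool} {S : Finset (Fin n)}
    (h : ∀ e : Sym2 (Fin n), ¬ e.IsDiag → (∀ v ∈ e, v ∈ S) → ω e = ω' e) :
    edgeCount ω S = edgeCount ω' S := by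
  unfold edgeCount
  congr 1
  ext e
  simp only [Set.mem_setOf_eq]
  constructor
  · rintro ⟨h1, h2, h3⟩; exact ⟨h1, h2, (h e h1 h2) ▸ h3⟩
  · rintro ⟨h1, h2, h3⟩; exact ⟨h1, h2, (h e h1 h2).symm ▸ h3⟩

lemma TSparse_congr {t : ℝ} {ω ω' : Sym2 (Fin n) → Bool} {S : Finset (Fin n)}
    (h : ∀ e : Sym2 (Fin n), ¬ e.IsDiag → (∀ v ∈ e, v ∈ S) → ω e = ω' e) :
    TSparse t ω S ↔ TSparse t ω' S := by
  unfold TSparse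
  rw [edgeCount_congr h]

lemma TSparse_anti {t : ℝ} {ω ω' : Sym2 (Fin n) → Bool} {S : Finset (Fin n)}
    (h : ∀ e, ω' e = true → ω e = true) (hS : TSparse t ω S) : TSparse t ω' S := by
  refine le_trans ?_ hS
  have hsub : {e : Sym2 (Fin n) | ¬ e.IsDiag ∧ (∀ v ∈ e, v ∈ S) ∧ ω' e = true}
      ⊆ {e : Sym2 (Fin n) | ¬ e.IsDiag ∧ (∀ v ∈ e, v ∈ S) ∧ ω e = true} :=
    fun e he => ⟨he.1, he.2.1, h e he.2.2⟩
  exact_mod_cast Nat.cast_le.mpr (Set.ncard_le_ncard hsub (Set.toFinite _))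

lemma gnp_factor (p : ℝ) (h0 : 0 ≤ p) (h1 : p ≤ 1) (q : Sym2 (Fin n) → Prop)
    (s u : Set (Sym2 (Fin n) → Bool))
    (hs : ∀ ω ω', (∀ e, q e → ω e = ω' e) → ω ∈ s → ω' ∈ s)
    (hu : ∀ ω ω', (∀ e, ¬ q e → ω e = ω' e) → ω ∈ u → ω' ∈ u) :
    gnp n p (s ∩ u) = gnp n p s * gnp n p u := by
  classical
  haveI : IsProbabilityMeasure (bern p) := bern_isProbability h0 h1
  have MP := measurePreserving_piEquivPiSubtypeProd (fun _ : Sym2 (Fin n) => bern p) q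
  set φ := MeasurableEquiv.piEquivPiSubtypeProd (fun _ : Sym2 (Fin n) => Bool) q with hφdef
  set s₁ : Set ({e : Sym2 (Fin n) // q e} → Bool) :=
    {x | (fun e => if h : q e then x ⟨e, h⟩ else false) ∈ s} with hs₁
  set u₁ : Set ({e : Sym2 (Fin n) // ¬ q e} → Bool) :=
    {y | (fun e => if h : ¬ q e then y ⟨e, h⟩ else false) ∈ u} with hu₁
  have hsrep : s = φ ⁻¹' (s₁ ×ˢ (Set.univ : Set ({e : Sym2 (Fin n) // ¬ q e} → Bool))) := by
    ext ω
    have h1 : ∀ e, q e → ω e = (fun e => if h : q e then (φ ω).1 ⟨e, h⟩ else false) e := by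
      intro e he; simp only [dif_pos he]; rfl
    simp only [Set.mem_preimage, Set.mem_prod, Set.mem_univ, and_true, hs₁, Set.mem_setOf_eq]
    exact ⟨fun hω => hs ω _ h1 hω, fun hω => hs _ ω (fun e he => (h1 e he).symm) hω⟩
  have hurep : u = φ ⁻¹' ((Set.univ : Set ({e : Sym2 (Fin n) // q e} → Bool)) ×ˢ u₁) := by
    ext ω
    have h1 : ∀ e, ¬ q e → ω e = (fun e => if h : ¬ q e then (φ ω).2 ⟨e, h⟩ else false) e := by
      intro e he; simp only [dif_pos he]; rfl
    simp only [Set.mem_preimage, Set.mem_prod, Set.mem_univ, true_and, hu₁, Set.mem_setOf_eq]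
    exact ⟨fun hω => hu ω _ h1 hω, fun hω => hu _ ω (fun e he => (h1 e he).symm) hω⟩
  have key : ∀ T, gnp n p (φ ⁻¹' T)
      = ((Measure.pi fun _ : {e : Sym2 (Fin n) // q e} => bern p).prod
          (Measure.pi fun _ : {e : Sym2 (Fin n) // ¬ q e} => bern p)) T :=
    fun T => MP.measure_preimage_equiv T
  rw [hsrep, hurep, ← Set.preimage_inter, key, key, key, Set.prod_inter_prod,
    Set.inter_univ, Set.univ_inter, Measure.prod_prod, Measure.prod_prod, Measure.prod_prod,
    measure_univ, measure_univ, one_mul, mul_one]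

lemma gnp_allFalse (p : ℝ) (h0 : 0 ≤ p) (h1 : p ≤ 1) (q : Sym2 (Fin n) → Prop) :
    gnp n p {ω | ∀ e, q e → ω e = false}
      = ENNReal.ofReal (1 - p) ^ (Fintype.card {e : Sym2 (Fin n) // q e}) := by
  classical
  haveI : IsProbabilityMeasure (bern p) := bern_isProbability h0 h1
  have MP := measurePreserving_piEquivPiSubtypeProd (fun _ : Sym2 (Fin n) => bern p) q
  set φ := MeasurableEquiv.piEquivPiSubtypeProd (fun _ : Sym2 (Fin n) => Bool) q with hφdef
  have hrep : {ω : Sym2 (Fin n) → Bool | ∀ e, q e → ω e = false}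
      = φ ⁻¹' ((Set.pi Set.univ fun _ => ({false} : Set Bool)) ×ˢ
          (Set.univ : Set ({e : Sym2 (Fin n) // ¬ q e} → Bool))) := by
    ext ω
    simp only [Set.mem_setOf_eq, Set.mem_preimage, Set.mem_prod, Set.mem_univ, and_true,
      Set.mem_pi, Set.mem_singleton_iff]
    constructor
    · intro h i _; exact h i.1 i.2
    · intro h e he; exact h ⟨e, he⟩ trivial
  have key : ∀ T, gnp n p (φ ⁻¹' T)
      = ((Measure.pi fun _ : {e : Sym2 (Fin n) // q e} => bern p).prod
          (Measure.pi fun _ : {e : Sym2 (Fin n) // ¬ q e} => bern p)) T :=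
    fun T => MP.measure_preimage_equiv T
  rw [hrep, key, Measure.prod_prod, measure_univ, mul_one, Measure.pi_pi]
  simp [bern_false h0]

lemma card_inner_edges (C : Finset (Fin n)) :
    Fintype.card {e : Sym2 (Fin n) // ¬ e.IsDiag ∧ ∀ v ∈ e, v ∈ C} = C.card.choose 2 := by
  classical
  rw [← Sym2.card_image_offDiag C]
  refine (Fintype.card_of_subtype (p := fun e : Sym2 (Fin n) => ¬ e.IsDiag ∧ ∀ v ∈ e, v ∈ C) (C.offDiag.image Sym2.mk.uncurry) ?_)
  intro e
  induction e using Sym2.ind with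
  | _ a b =>
    simp only [Finset.mem_image, Finset.mem_offDiag, Prod.exists, Sym2.mk_isDiag_iff,
        Function.uncurry_apply_pair]
    constructor
    · rintro ⟨x, y, ⟨hx, hy, hxy⟩, h⟩
      rw [Sym2.eq_iff] at h
      rcases h with ⟨rfl, rfl⟩ | ⟨rfl, rfl⟩
      · exact ⟨hxy, fun v hv => by rcases Sym2.mem_iff.mp hv with rfl | rfl <;> assumption⟩
      · exact ⟨fun h => hxy h.symm, fun v hv => by
          rcases Sym2.mem_iff.mp hv with rfl | rfl <;> assumption⟩
    · rintro ⟨hab, hmem⟩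
      exact ⟨a, b, ⟨hmem a (Sym2.mem_mk_left a b), hmem b (Sym2.mem_mk_right a b), hab⟩, rfl⟩

/-- Relabelling of edges induced by a vertex permutation. -/
noncomputable def sym2Perm (sg : Equiv.Perm (Fin n)) : Sym2 (Fin n) ≃ Sym2 (Fin n) where
  toFun := Sym2.map sg
  invFun := Sym2.map sg.symm
  left_inv e := by
    rw [Sym2.map_map]
    simp [Equiv.symm_comp_self, Sym2.map_id]
  right_inv e := by
    rw [Sym2.map_map]
    simp [Equiv.self_comp_symm, Sym2.map_id]

lemma edgeCount_perm (sg : Equiv.Perm (Fin n)) (A B : Finset (Fin n))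
    (hsg : ∀ v, v ∈ B ↔ sg v ∈ A) (ω : Sym2 (Fin n) → Bool) :
    edgeCount (fun e => ω (e.map sg)) B = edgeCount ω A := by
  unfold edgeCount
  have himg : Sym2.map sg ''
      {e : Sym2 (Fin n) | ¬ e.IsDiag ∧ (∀ v ∈ e, v ∈ B) ∧ ω (e.map sg) = true}
      = {e : Sym2 (Fin n) | ¬ e.IsDiag ∧ (∀ v ∈ e, v ∈ A) ∧ ω e = true} := by
    ext g
    simp only [Set.mem_image, Set.mem_setOf_eq]
    constructor
    · rintro ⟨f, ⟨hd, hmem, hω⟩, rfl⟩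
      refine ⟨fun h => hd ((Sym2.isDiag_map sg.injective).mp h), ?_, hω⟩
      intro v hv
      rcases Sym2.mem_map.mp hv with ⟨a, ha, rfl⟩
      exact (hsg a).mp (hmem a ha)
    · rintro ⟨hd, hmem, hω⟩
      refine ⟨g.map sg.symm, ⟨?_, ?_, ?_⟩, ?_⟩
      · intro h
        exact hd ((Sym2.isDiag_map sg.symm.injective).mp h)
      · intro v hv
        rcases Sym2.mem_map.mp hv with ⟨a, ha, rfl⟩
        rw [hsg]
        simpa using hmem a ha
      · rw [Sym2.map_map]
        simpa [Equiv.self_comp_symm, Sym2.map_id] using hω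
      · rw [Sym2.map_map]
        simp [Equiv.self_comp_symm, Sym2.map_id]
  rw [← himg, Set.ncard_image_of_injective _ (Sym2.map.injective sg.injective)]

lemma gnp_sparse_perm (p t : ℝ) (h0 : 0 ≤ p) (h1 : p ≤ 1) (A B : Finset (Fin n))
    (hcard : B.card = A.card) :
    gnp n p {ω | TSparse t ω A} = gnp n p {ω | TSparse t ω B} := by
  classical
  haveI : IsProbabilityMeasure (bern p) := bern_isProbability h0 h1
  -- build a permutation mapping B onto A
  have hc : Fintype.card {x : Fin n // x ∈ B} = Fintype.card {x : Fin n // x ∈ A} := by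
    simp only [Fintype.card_coe, hcard]
  let e₁ : {x : Fin n // x ∈ B} ≃ {x : Fin n // x ∈ A} := Fintype.equivOfCardEq hc
  let sg : Equiv.Perm (Fin n) := e₁.extendSubtype
  have hsg : ∀ v, v ∈ B ↔ sg v ∈ A := by
    intro v
    by_cases hv : v ∈ B
    · simp only [hv, true_iff]
      exact e₁.extendSubtype_mem v hv
    · simp only [hv, false_iff]
      exact e₁.extendSubtype_not_mem v hv
  -- measure-preserving relabeling
  let g : Sym2 (Fin n) ≃ Sym2 (Fin n) := (sym2Perm sg).symm
  have MP := measurePreserving_arrowCongr' (fun _ : Sym2 (Fin n) => bern p)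
      (fun _ : Sym2 (Fin n) => bern p) g (MeasurableEquiv.refl Bool)
      (fun _ => ⟨measurable_id, Measure.map_id⟩)
  have key : gnp n p ((MeasurableEquiv.arrowCongr' g (MeasurableEquiv.refl Bool)) ⁻¹'
      {ω | TSparse t ω B}) = gnp n p {ω | TSparse t ω B} :=
    MP.measure_preimage_equiv _
  have hset : (MeasurableEquiv.arrowCongr' g (MeasurableEquiv.refl Bool)) ⁻¹'
      {ω : Sym2 (Fin n) → Bool | TSparse t ω B} = {ω | TSparse t ω A} := by
    ext ω
    simp only [Set.mem_preimage, Set.mem_setOf_eq]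
    show TSparse t (fun e => ω (e.map sg)) B ↔ TSparse t ω A
    unfold TSparse
    rw [edgeCount_perm sg A B hsg ω, hcard]
  rw [← key, hset]

end Helpers

/-- correlation bound for two overlapping `t`-sparse sets. -/
theorem overlap_correlation_bound (p t : ℝ) (hp0 : 0 < p) (hp1 : p < 1) (ht : 0 ≤ t)
    (n k l : ℕ) (hl : 0 < l) (hlk : l ≤ k) (hkn : k ≤ n)
    (A B : Finset (Fin n)) (hA : A.card = k) (hB : B.card = k) (hAB : (A ∩ B).card = l) :
    (gnp n p {ω | TSparse t ω A ∧ TSparse t ω B}).toReal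
      ≤ (1 / (1 - p)) ^ (l.choose 2) * ((gnp n p {ω | TSparse t ω A}).toReal) ^ 2 := by
  classical
  have h0 : (0:ℝ) ≤ p := hp0.le
  have h1 : p ≤ 1 := hp1.le
  have h1p : (0:ℝ) < 1 - p := by linarith
  haveI : IsProbabilityMeasure (bern p) := bern_isProbability h0 h1
  haveI : IsProbabilityMeasure (gnp n p) := by unfold gnp; infer_instance
  set μ := gnp n p with hμ
  set m := l.choose 2 with hm
  -- inner edge predicate and zeroing map
  set qI : Sym2 (Fin n) → Prop := fun e => ¬ e.IsDiag ∧ ∀ v ∈ e, v ∈ A ∩ B with hqI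
  set z : (Sym2 (Fin n) → Bool) → (Sym2 (Fin n) → Bool) :=
    fun ω e => if qI e then false else ω e with hz
  set SA : Set (Sym2 (Fin n) → Bool) := {ω | TSparse t ω A} with hSA
  set SB : Set (Sym2 (Fin n) → Bool) := {ω | TSparse t ω B} with hSB
  set ZB : Set (Sym2 (Fin n) → Bool) := {ω | TSparse t (z ω) B} with hZB
  set F : Set (Sym2 (Fin n) → Bool) := {ω | ∀ e, qI e → ω e = false} with hF
  -- Step 1
  have hsub1 : {ω : Sym2 (Fin n) → Bool | TSparse t ω A ∧ TSparse t ω B} ⊆ SA ∩ ZB := by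
    rintro ω ⟨hωA, hωB⟩
    refine ⟨hωA, ?_⟩
    refine TSparse_anti (fun e he => ?_) hωB
    by_cases hq : qI e
    · rw [hz] at he
      simp only [if_pos hq] at he
      exact absurd he (by simp)
    · rw [hz] at he
      simpa only [if_neg hq] using he
  -- Step 2 : independence of SA and ZB
  have hstep2 : μ (SA ∩ ZB) = μ SA * μ ZB := by
    refine gnp_factor p h0 h1 (fun e => ¬ e.IsDiag ∧ ∀ v ∈ e, v ∈ A) SA ZB ?_ ?_
    · intro ω ω' hagree hω
      exact (TSparse_congr (fun e hd hmem => hagree e ⟨hd, hmem⟩)).mp hω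
    · intro ω ω' hagree hω
      refine (TSparse_congr (fun e hd hmem => ?_)).mp hω
      show (if qI e then false else ω e) = (if qI e then false else ω' e)
      by_cases hq : qI e
      · simp only [if_pos hq]
      · have hnA : ¬ (¬ e.IsDiag ∧ ∀ v ∈ e, v ∈ A) := by
          intro h
          exact hq ⟨hd, fun v hv => Finset.mem_inter.mpr ⟨h.2 v hv, hmem v hv⟩⟩
        simp only [if_neg hq]
        exact hagree e hnA
  -- Step 3 : μ ZB * (1-p)^m ≤ μ SB
  have hcardI : ∀ (inst : Fintype {e : Sym2 (Fin n) // qI e}),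
      @Fintype.card {e : Sym2 (Fin n) // qI e} inst = m := by
    intro inst
    rw [hm, ← hAB]
    convert card_inner_edges (A ∩ B) using 2
  have hstep3 : μ F * μ ZB ≤ μ SB := by
    have hfac : μ (F ∩ ZB) = μ F * μ ZB := by
      refine gnp_factor p h0 h1 qI F ZB ?_ ?_
      · intro ω ω' hagree hω e he
        rw [← hagree e he]; exact hω e he
      · intro ω ω' hagree hω
        have hzz : z ω = z ω' := by
          funext e
          show (if qI e then false else ω e) = (if qI e then false else ω' e)
          by_cases hq : qI e
          · simp only [if_pos hq]
          · simp only [if_neg hq]; exact hagree e hq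
        simpa [hZB, Set.mem_setOf_eq, ← hzz] using hω
    rw [← hfac]
    refine measure_mono ?_
    rintro ω ⟨hωF, hωZ⟩
    have hzω : z ω = ω := by
      funext e
      show (if qI e then false else ω e) = ω e
      by_cases hq : qI e
      · rw [if_pos hq, hωF e hq]
      · rw [if_neg hq]
    simpa [hSB, hZB, Set.mem_setOf_eq, hzω] using hωZ
  have hμF : μ F = ENNReal.ofReal (1 - p) ^ m := by
    rw [hμ, hF, gnp_allFalse p h0 h1 qI]
    rw [hcardI _]
  -- Step 4 : μ ZB ≤ b^m * μ SB
  set b : ℝ≥0∞ := ENNReal.ofReal (1 / (1 - p)) with hb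
  have hbinv : ENNReal.ofReal (1 - p) * b = 1 := by
    rw [hb, ← ENNReal.ofReal_mul h1p.le]
    rw [mul_one_div, div_self (ne_of_gt h1p)]
    exact ENNReal.ofReal_one
  have hstep4 : μ ZB ≤ b ^ m * μ SB := by
    have : μ ZB = (ENNReal.ofReal (1 - p) ^ m * μ ZB) * b ^ m := by
      rw [mul_comm (ENNReal.ofReal (1 - p) ^ m) (μ ZB), mul_assoc, ← mul_pow, hbinv,
        one_pow, mul_one]
    rw [this]
    calc (ENNReal.ofReal (1 - p) ^ m * μ ZB) * b ^ m
        ≤ μ SB * b ^ m := by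
          refine mul_le_mul_left ?_ _
          rw [← hμF]; exact hstep3
      _ = b ^ m * μ SB := mul_comm _ _
  -- Step 5 : symmetry
  have hstep5 : μ SB = μ SA := by
    rw [hSA, hSB, hμ]
    exact (gnp_sparse_perm p t h0 h1 A B (by rw [hA, hB])).symm
  -- combine in ℝ≥0∞
  have hmain : μ {ω | TSparse t ω A ∧ TSparse t ω B} ≤ b ^ m * μ SA ^ 2 := by
    calc μ {ω | TSparse t ω A ∧ TSparse t ω B}
        ≤ μ (SA ∩ ZB) := measure_mono hsub1
      _ = μ SA * μ ZB := hstep2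
      _ ≤ μ SA * (b ^ m * μ SB) := mul_le_mul_right hstep4 _
      _ = b ^ m * μ SA ^ 2 := by rw [hstep5]; ring
  -- convert to real numbers
  have hbne : b ^ m ≠ ⊤ := by
    rw [hb]; exact ENNReal.pow_ne_top ENNReal.ofReal_ne_top
  have hSAne : μ SA ≠ ⊤ := measure_ne_top _ _
  have hRne : b ^ m * μ SA ^ 2 ≠ ⊤ := by
    exact ENNReal.mul_ne_top hbne (ENNReal.pow_ne_top hSAne)
  have := ENNReal.toReal_mono hRne hmain
  refine le_trans this ?_
  rw [ENNReal.toReal_mul, ENNReal.toReal_pow, ENNReal.toReal_pow, hb,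
    ENNReal.toReal_ofReal (by positivity)]
end
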